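/- Let V be a weighted digraph and suppose φ_{k-1} - φ_k > φ_k - φ_{k+1}. Let i and j be vertices that are each a root of some minimal-weight spanning k-forest (marked vertices of level k). If i is accessible from j in some minimal-weight spanning k-forest, then j is accessible from i in some minimal-weight spanning k-forest, and moreover in every minimal-weight spanning k-forest the vertices i and j belong to the same tree. -/

import Mathlib

open Relation

/-- The arc relation of a functional digraph: `F i = some j` means there is an arc `i → j`. -/
def Arc {V : Type*} (F : V → Option V) (i j : V) : Prop := F i = some j

/-- A directed forest: a functional digraph (out-degree ≤ 1) without directed circuits. -/
def IsForest {V : Type*} (F : V → Option V) : Prop :=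
  ∀ i, ¬ Relation.TransGen (Arc F) i i

/-- `j` is accessible from `i` by a directed walk. -/
def Reaches {V : Type*} (F : V → Option V) (i j : V) : Prop :=
  Relation.ReflTransGen (Arc F) i j

open Classical in
/-- The `D`-exchange of `F` by `G`: replace the outgoing arcs (in `F`) of vertices of `D`
by their outgoing arcs in `G`. -/
noncomputable def exchange {V : Type*} (D : Set V) (F G : V → Option V) : V → Option V :=
  fun i => if i ∈ D then G i else F i

/-- The set of vertices of the tree of the forest `F` with root `r`. -/
def treeSet {V : Type*} (F : V → Option V) (r : V) : Set V := {i | Reaches F i r}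

section Weighted

variable {V : Type*} [Fintype V] [DecidableEq V]

/-- A spanning forest of the digraph with arc relation `A`. -/
def IsSpanningForest (A : V → V → Prop) (F : V → Option V) : Prop :=
  IsForest F ∧ ∀ i j, F i = some j → A i j

/-- The number of trees (= roots) of a forest. -/
def numTrees (F : V → Option V) : ℕ :=
  (Finset.univ.filter (fun i => F i = none)).card

/-- The weight of a forest: the sum of the weights of its arcs. -/
noncomputable def weight (w : V → V → ℝ) (F : V → Option V) : ℝ :=
  ∑ i, (F i).elim 0 (w i)

/-- `F` is a minimal-weight (extreme) spanning forest with `k` trees. -/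
def ExtremeForest (A : V → V → Prop) (w : V → V → ℝ) (k : ℕ) (F : V → Option V) : Prop :=
  IsSpanningForest A F ∧ numTrees F = k ∧
    ∀ G, IsSpanningForest A G → numTrees G = k → weight w F ≤ weight w G

/-- `φ_k`: the minimum weight of a spanning forest with exactly `k` trees. -/
noncomputable def phi (A : V → V → Prop) (w : V → V → ℝ) (k : ℕ) : ℝ :=
  sInf (weight w '' {F | IsSpanningForest A F ∧ numTrees F = k})

end Weighted

section Algebras

variable {V : Type*} [Fintype V] [DecidableEq V]

/-- The generating family of `A_k`: vertex sets of trees of minimal-weight spanning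
`k`-forests. -/
def genSets (A : V → V → Prop) (w : V → V → ℝ) (k : ℕ) : Set (Set V) :=
  {S | ∃ F r, ExtremeForest A w k F ∧ F r = none ∧ S = treeSet F r}

/-- The algebra `A_k` of subsets of the vertex set generated by the vertex sets of trees of
minimal-weight spanning `k`-forests. -/
noncomputable def alg (A : V → V → Prop) (w : V → V → ℝ) (k : ℕ) : MeasurableSpace V :=
  MeasurableSpace.generateFrom (genSets A w k)

/-- `E` is an elementary set (atom) of the algebra `m`. -/
def IsElementary (m : MeasurableSpace V) (E : Set V) : Prop :=
  @MeasurableSet V m E ∧ E.Nonempty ∧ ∀ S, @MeasurableSet V m S → S ⊆ E → S = ∅ ∨ S = E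

/-- `i` is a marked vertex of level `k`: a root of some minimal-weight spanning `k`-forest. -/
def IsMarked (A : V → V → Prop) (w : V → V → ℝ) (k : ℕ) (i : V) : Prop :=
  ∃ F, ExtremeForest A w k F ∧ F i = none

end Algebras

-- ==== auxiliary lemmas (imported from previous scratch, assumed OK) ====
section Basic
variable {V : Type*} {F G : V → Option V}

lemma reaches_root_unique {x a b : V} (hxa : Reaches F x a) (ha : F a = none)
    (hxb : Reaches F x b) (hb : F b = none) : a = b := by
  induction hxa using Relation.ReflTransGen.head_induction_on with
  | refl =>
    rcases hxb.cases_head with rfl | ⟨c, hc, _⟩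
    · rfl
    · rw [Arc, ha] at hc; cases hc
  | head h₁ h₂ ih =>
    rename_i x' c
    rcases hxb.cases_head with rfl | ⟨c', hc', h'⟩
    · rw [Arc, hb] at h₁; cases h₁
    · rw [Arc] at h₁ hc'
      rw [h₁] at hc'
      injection hc' with h''
      exact ih (h'' ▸ h')

lemma exists_root [Finite V] (hF : IsForest F) (x : V) :
    ∃ r, Reaches F x r ∧ F r = none := by
  have wf : WellFounded (fun a b : V => TransGen (Arc F) b a) := by
    haveI : IsTrans V (fun a b : V => TransGen (Arc F) b a) :=
      ⟨fun a b c h1 h2 => h2.trans h1⟩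
    haveI : IsIrrefl V (fun a b : V => TransGen (Arc F) b a) := ⟨fun a => hF a⟩
    exact Finite.wellFounded_of_trans_of_irrefl _
  have wf2 : WellFounded (fun a b : V => Arc F b a) :=
    Subrelation.wf (fun h => TransGen.single h) wf
  induction x using wf2.induction with
  | _ x ih =>
    cases hx : F x with
    | none => exact ⟨x, ReflTransGen.refl, hx⟩
    | some y =>
      obtain ⟨r, hr1, hr2⟩ := ih y hx
      exact ⟨r, ReflTransGen.head hx hr1, hr2⟩

open Classical in
noncomputable def theRoot (F : V → Option V) (x : V) : V :=
  if h : ∃ r, Reaches F x r ∧ F r = none then h.choose else x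

lemma theRoot_spec [Finite V] (hF : IsForest F) (x : V) :
    Reaches F x (theRoot F x) ∧ F (theRoot F x) = none := by
  rw [theRoot, dif_pos (exists_root hF x)]
  exact (exists_root hF x).choose_spec

lemma exchange_mem {D : Set V} {x : V} (h : x ∈ D) : exchange D F G x = G x := if_pos h
lemma exchange_not_mem {D : Set V} {x : V} (h : x ∉ D) : exchange D F G x = F x := if_neg h

lemma tree_closed {r x y : V} (hr : G r = none) (hx : x ∈ treeSet G r)
    (hxy : G x = some y) : y ∈ treeSet G r := by
  rcases (hx : Reaches G x r).cases_head with rfl | ⟨c, hc, h'⟩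
  · rw [hr] at hxy; cases hxy
  · rw [Arc] at hc; rw [hxy] at hc; injection hc with hc; exact hc ▸ h'

lemma exchange_isForest {S : Set V} (hF : IsForest F) (hG : IsForest G)
    (hS : ∀ x ∈ S, ∀ y, G x = some y → y ∈ S) : IsForest (exchange S F G) := by
  set E := exchange S F G with hE
  have subA : ∀ x y, TransGen (Arc E) x y → x ∈ S → TransGen (Arc G) x y ∧ y ∈ S := by
    intro x y h hx
    induction h with
    | single h1 =>
      rename_i b
      have hgb : G x = some b := by rwa [Arc, hE, exchange_mem hx] at h1
      exact ⟨TransGen.single hgb, hS _ hx _ hgb⟩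
    | tail h1 h2 ih =>
      rename_i b c
      obtain ⟨tg, hb⟩ := ih
      have hgc : G b = some c := by rwa [Arc, hE, exchange_mem hb] at h2
      exact ⟨tg.tail hgc, hS _ hb _ hgc⟩
  have subB : ∀ x y, TransGen (Arc E) x y → x ∉ S → y ∈ S ∨ TransGen (Arc F) x y := by
    intro x y h hx
    induction h with
    | single h1 =>
      right
      exact TransGen.single (by rwa [Arc, hE, exchange_not_mem hx] at h1)
    | tail h1 h2 ih =>
      rename_i b c
      rcases ih with hb | tg
      · left
        have hgc : G b = some c := by rwa [Arc, hE, exchange_mem hb] at h2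
        exact hS _ hb _ hgc
      · by_cases hb : b ∈ S
        · left
          have hgc : G b = some c := by rwa [Arc, hE, exchange_mem hb] at h2
          exact hS _ hb _ hgc
        · right
          exact tg.tail (by rwa [Arc, hE, exchange_not_mem hb] at h2)
  intro x hcyc
  by_cases hx : x ∈ S
  · exact hG x (subA x x hcyc hx).1
  · rcases subB x x hcyc hx with h | h
    · exact hx h
    · exact hF x h

lemma exchange_compl_isForest {r : V} (hF : IsForest F) (hG : IsForest G) :
    IsForest (exchange (treeSet G r)ᶜ F G) := by
  apply exchange_isForest hF hG
  intro x hx y hxy hy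
  exact hx (ReflTransGen.head hxy hy)
end Basic

section Weighted2
variable {V : Type*} [Fintype V] [DecidableEq V]
open Classical
variable {A : V → V → Prop} {w : V → V → ℝ} {F G : V → Option V} {k m : ℕ}

lemma phi_le (hF : IsSpanningForest A F) (hm : numTrees F = m) :
    phi A w m ≤ weight w F := by
  apply csInf_le
  · exact (Set.toFinite _).image _ |>.bddBelow
  · exact ⟨F, ⟨hF, hm⟩, rfl⟩

lemma extreme_weight_eq (hF : ExtremeForest A w k F) : weight w F = phi A w k := by
  refine le_antisymm ?_ (phi_le hF.1 hF.2.1)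
  have hne : (weight w '' {F | IsSpanningForest A F ∧ numTrees F = k}).Nonempty :=
    ⟨weight w F, F, ⟨hF.1, hF.2.1⟩, rfl⟩
  obtain ⟨G, ⟨hG1, hG2⟩, hGw⟩ := hne.csInf_mem ((Set.toFinite _).image _)
  rw [phi, ← hGw]
  exact hF.2.2 G hG1 hG2

lemma exchange_spanning {D : Set V} (hF : IsSpanningForest A F) (hG : IsSpanningForest A G)
    (hforest : IsForest (exchange D F G)) : IsSpanningForest A (exchange D F G) := by
  refine ⟨hforest, fun i j hij => ?_⟩
  rw [exchange] at hij
  split at hij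
  · exact hG.2 i j hij
  · exact hF.2 i j hij

lemma numTrees_exchange (D : Set V) (F G : V → Option V) :
    numTrees (exchange D F G) =
      (Finset.univ.filter fun i => i ∈ D ∧ G i = none).card +
      (Finset.univ.filter fun i => i ∉ D ∧ F i = none).card := by
  rw [numTrees, ← Finset.card_union_of_disjoint]
  · congr 1
    rw [← Finset.filter_or]
    apply Finset.filter_congr
    intro x _
    by_cases h : x ∈ D <;> simp [exchange, h]
  · rw [Finset.disjoint_left]
    intro a ha hb
    simp only [Finset.mem_filter] at ha hb
    exact hb.2.1 ha.2.1

lemma numTrees_exchange_add (D : Set V) (F G : V → Option V) :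
    numTrees (exchange D F G) + numTrees (exchange Dᶜ F G) = numTrees F + numTrees G := by
  classical
  have h : ∀ X : V → Option V, numTrees X = ∑ i : V, (if X i = none then 1 else 0) := by
    intro X
    rw [numTrees, Finset.card_filter]
  rw [h, h, h, h, ← Finset.sum_add_distrib, ← Finset.sum_add_distrib]
  apply Finset.sum_congr rfl
  intro x _
  by_cases hx : x ∈ D
  · rw [exchange_mem hx, exchange_not_mem (by simp [hx] : x ∉ Dᶜ)]
    exact add_comm _ _
  · rw [exchange_not_mem hx, exchange_mem (by simp [hx] : x ∈ Dᶜ)]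

lemma filter_split_card (D : Set V) (F : V → Option V) :
    (Finset.univ.filter fun x => x ∈ D ∧ F x = none).card +
      (Finset.univ.filter fun x => x ∉ D ∧ F x = none).card = numTrees F := by
  rw [numTrees, ← Finset.card_union_of_disjoint]
  · congr 1
    rw [← Finset.filter_or]
    apply Finset.filter_congr
    intro x _
    by_cases h : x ∈ D <;> simp [h]
  · rw [Finset.disjoint_left]
    intro a ha hb
    simp only [Finset.mem_filter] at ha hb
    exact hb.2.1 ha.2.1

lemma weight_exchange_add (D : Set V) (F G : V → Option V) :
    weight w (exchange D F G) + weight w (exchange Dᶜ F G) = weight w F + weight w G := by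
  rw [weight, weight, weight, weight, ← Finset.sum_add_distrib, ← Finset.sum_add_distrib]
  apply Finset.sum_congr rfl
  intro x _
  by_cases h : x ∈ D
  · simp [exchange, h, add_comm]
  · simp [exchange, h]

lemma tree_root_filter {r : V} (hr : G r = none) :
    (Finset.univ.filter fun x => x ∈ treeSet G r ∧ G x = none) = {r} := by
  ext x
  simp only [Finset.mem_filter, Finset.mem_univ, true_and, Finset.mem_singleton]
  constructor
  · rintro ⟨hx, hx2⟩
    rcases (hx : Reaches G x r).cases_head with rfl | ⟨c, hc, _⟩
    · rfl
    · rw [Arc, hx2] at hc; cases hc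
  · rintro rfl
    exact ⟨ReflTransGen.refl, hr⟩

/-- KEY: each tree of an extreme `k`-forest contains exactly one root of any other
extreme `k`-forest (under strict convexity at `k`). -/
lemma tree_root_count
    (hlt : phi A w (k - 1) - phi A w k > phi A w k - phi A w (k + 1))
    (hF : ExtremeForest A w k F) (hG : ExtremeForest A w k G) {r : V} (hr : G r = none) :
    (Finset.univ.filter fun x => x ∈ treeSet G r ∧ F x = none).card = 1 := by
  classical
  set RF := Finset.univ.filter (fun x => F x = none) with hRFdef
  set RG := Finset.univ.filter (fun x => G x = none) with hRGdef
  have hRF : RF.card = k := hF.2.1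
  have hRG : RG.card = k := hG.2.1
  set ρ := theRoot G with hρdef
  have hρ : ∀ x, Reaches G x (ρ x) ∧ G (ρ x) = none := theRoot_spec hG.1.1
  have hconv : ∀ r', G r' = none →
      (Finset.univ.filter fun x => x ∈ treeSet G r' ∧ F x = none)
        = RF.filter (fun x => ρ x = r') := by
    intro r' hr'
    ext x
    simp only [Finset.mem_filter, Finset.mem_univ, true_and, hRFdef]
    constructor
    · rintro ⟨hx1, hx2⟩
      exact ⟨hx2, reaches_root_unique (hρ x).1 (hρ x).2 hx1 hr'⟩
    · rintro ⟨hx2, hx1⟩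
      exact ⟨hx1 ▸ (hρ x).1, hx2⟩
  -- every tree contains at least one F-root
  have hge : ∀ r' ∈ RG, 1 ≤ (RF.filter (fun x => ρ x = r')).card := by
    intro r' hr'mem
    rw [hRGdef, Finset.mem_filter] at hr'mem
    have hr' : G r' = none := hr'mem.2
    by_contra hcon
    have h0 : (RF.filter (fun x => ρ x = r')).card = 0 := by omega
    have h0' : (Finset.univ.filter fun x => x ∈ treeSet G r' ∧ F x = none).card = 0 := by
      rw [hconv r' hr']; exact h0
    set D := treeSet G r' with hD
    -- exchanges
    have hforest1 : IsForest (exchange D F G) :=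
      exchange_isForest hF.1.1 hG.1.1 (fun x hx y hxy => tree_closed hr' hx hxy)
    have hforest2 : IsForest (exchange Dᶜ F G) := exchange_compl_isForest hF.1.1 hG.1.1
    have hsp1 := exchange_spanning (A := A) hF.1 hG.1 hforest1
    have hsp2 := exchange_spanning (A := A) hF.1 hG.1 hforest2
    -- tree counts
    have hGsplit := filter_split_card D G
    have hFsplit := filter_split_card D F
    rw [hF.2.1] at hFsplit
    rw [hG.2.1] at hGsplit
    have haG : (Finset.univ.filter fun x => x ∈ D ∧ G x = none).card = 1 := by
      rw [tree_root_filter hr']; simp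
    have haF : (Finset.univ.filter fun x => x ∈ D ∧ F x = none).card = 0 := h0'
    have hbF : (Finset.univ.filter fun x => x ∉ D ∧ F x = none).card = k := by omega
    have hn1 : numTrees (exchange D F G) = k + 1 := by
      rw [numTrees_exchange, haG, hbF]; omega
    have hn2 : numTrees (exchange Dᶜ F G) = k - 1 := by
      have := numTrees_exchange_add D F G
      rw [hn1, hF.2.1, hG.2.1] at this
      omega
    -- weights
    have hw : weight w (exchange D F G) + weight w (exchange Dᶜ F G)
        = phi A w k + phi A w k := by
      rw [weight_exchange_add, extreme_weight_eq hF, extreme_weight_eq hG]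
    have hphi1 : phi A w (k + 1) ≤ weight w (exchange D F G) := phi_le hsp1 hn1
    have hphi2 : phi A w (k - 1) ≤ weight w (exchange Dᶜ F G) := phi_le hsp2 hn2
    linarith
  -- fiberwise counting
  have hfib : RF.card = ∑ r' ∈ RG, (RF.filter (fun x => ρ x = r')).card := by
    apply Finset.card_eq_sum_card_fiberwise
    intro x hx
    rw [hRGdef, Finset.mem_coe, Finset.mem_filter]
    exact ⟨Finset.mem_univ _, (hρ x).2⟩
  have hall : ∀ r' ∈ RG, (RF.filter (fun x => ρ x = r')).card = 1 := by
    intro r' hr'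
    by_contra hne
    have hsum : ∑ _x ∈ RG, 1 < ∑ x ∈ RG, (RF.filter (fun t => ρ t = x)).card := by
      apply Finset.sum_lt_sum (fun x hx => hge x hx)
      exact ⟨r', hr', by have := hge r' hr'; omega⟩
    rw [← hfib, hRF] at hsum
    simp only [Finset.sum_const, smul_eq_mul, mul_one] at hsum
    rw [hRG] at hsum
    omega
  have hrmem : r ∈ RG := by rw [hRGdef, Finset.mem_filter]; exact ⟨Finset.mem_univ _, hr⟩
  rw [hconv r hr]
  exact hall r hrmem

/-- The tree-exchange of two extreme `k`-forests is extreme. -/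
lemma exchange_extreme
    (hlt : phi A w (k - 1) - phi A w k > phi A w k - phi A w (k + 1))
    (hF : ExtremeForest A w k F) (hG : ExtremeForest A w k G) {r : V} (hr : G r = none) :
    ExtremeForest A w k (exchange (treeSet G r) F G) := by
  classical
  set D := treeSet G r with hD
  have c1 : (Finset.univ.filter fun x => x ∈ D ∧ F x = none).card = 1 :=
    tree_root_count hlt hF hG hr
  have hforest1 : IsForest (exchange D F G) :=
    exchange_isForest hF.1.1 hG.1.1 (fun x hx y hxy => tree_closed hr hx hxy)
  have hforest2 : IsForest (exchange Dᶜ F G) := exchange_compl_isForest hF.1.1 hG.1.1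
  have hsp1 := exchange_spanning (A := A) hF.1 hG.1 hforest1
  have hsp2 := exchange_spanning (A := A) hF.1 hG.1 hforest2
  have hGsplit := filter_split_card D G
  have hFsplit := filter_split_card D F
  rw [hF.2.1] at hFsplit
  rw [hG.2.1] at hGsplit
  have haG : (Finset.univ.filter fun x => x ∈ D ∧ G x = none).card = 1 := by
    rw [hD, tree_root_filter hr]; simp
  have hn1 : numTrees (exchange D F G) = k := by
    rw [numTrees_exchange, haG]; omega
  have hn2 : numTrees (exchange Dᶜ F G) = k := by
    have := numTrees_exchange_add D F G
    rw [hn1, hF.2.1, hG.2.1] at this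
    omega
  have hw : weight w (exchange D F G) + weight w (exchange Dᶜ F G)
      = phi A w k + phi A w k := by
    rw [weight_exchange_add, extreme_weight_eq hF, extreme_weight_eq hG]
  have hphi1 : phi A w k ≤ weight w (exchange D F G) := phi_le hsp1 hn1
  have hphi2 : phi A w k ≤ weight w (exchange Dᶜ F G) := phi_le hsp2 hn2
  have hweq : weight w (exchange D F G) = phi A w k := by linarith
  exact ⟨hsp1, hn1, fun G' h1 h2 => hweq ▸ phi_le h1 h2⟩

end Weighted2

section Main
variable {V : Type*} [Fintype V] [DecidableEq V]
variable {A : V → V → Prop} {w : V → V → ℝ} {F G : V → Option V} {k : ℕ}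

/-- two roots of an extreme forest in a single tree of another extreme forest coincide. -/
lemma root_in_tree_unique
    (hlt : phi A w (k - 1) - phi A w k > phi A w k - phi A w (k + 1))
    (hF : ExtremeForest A w k F) (hG : ExtremeForest A w k G) {r x y : V}
    (hr : G r = none) (hx : x ∈ treeSet G r) (hy : y ∈ treeSet G r)
    (hxr : F x = none) (hyr : F y = none) : x = y := by
  classical
  by_contra hne
  have hcount := tree_root_count hlt hF hG hr
  have hsub : ({x, y} : Finset V)
      ⊆ Finset.univ.filter (fun t => t ∈ treeSet G r ∧ F t = none) := by
    intro t ht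
    rcases Finset.mem_insert.mp ht with rfl | ht
    · simp only [Finset.mem_filter, Finset.mem_univ, true_and]
      exact ⟨hx, hxr⟩
    · rw [Finset.mem_singleton] at ht
      subst ht
      simp only [Finset.mem_filter, Finset.mem_univ, true_and]
      exact ⟨hy, hyr⟩
  have h2 := Finset.card_le_card hsub
  rw [Finset.card_pair hne] at h2
  omega

end Main

/-- Under the strict convexity inequality, if marked vertex `i` is attainable from marked
vertex `j` at level `k`, then `j` is attainable from `i` at level `k`, and in every
minimal-weight spanning `k`-forest the vertices `i` and `j` belong to the same tree. -/

theorem marked_mutually_attainable {V : Type*} [Fintype V] [DecidableEq V]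
    (A : V → V → Prop) (w : V → V → ℝ) (k : ℕ)
    (hk : 2 ≤ k) (hk' : k + 1 ≤ Fintype.card V)
    (hEx : ∃ F, IsSpanningForest A F ∧ numTrees F = k - 1)
    (hlt : phi A w (k - 1) - phi A w k > phi A w k - phi A w (k + 1))
    (i j : V) (hi : IsMarked A w k i) (hj : IsMarked A w k j)
    (hacc : ∃ F, ExtremeForest A w k F ∧ Reaches F j i) :
    (∃ G, ExtremeForest A w k G ∧ Reaches G i j) ∧
      ∀ H, ExtremeForest A w k H → ∃ r, H r = none ∧ Reaches H i r ∧ Reaches H j r := by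
  classical
  obtain ⟨Fi, hFi, hFii⟩ := hi
  obtain ⟨Fj, hFj, hFjj⟩ := hj
  obtain ⟨F0, hF0, hF0ji⟩ := hacc
  by_cases hij : i = j
  · subst hij
    refine ⟨⟨Fi, hFi, ReflTransGen.refl⟩, fun H hH => ?_⟩
    obtain ⟨r, hr1, hr2⟩ := exists_root hH.1.1 i
    exact ⟨r, hr2, hr1, hr1⟩
  -- Step A : i belongs to the tree of `Fj` rooted at `j`
  have hjDj : j ∈ treeSet Fj j := ReflTransGen.refl
  have hiDi : i ∈ treeSet Fi i := ReflTransGen.refl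
  have stepA : i ∈ treeSet Fj j := by
    by_contra hA
    have hH2ex : ExtremeForest A w k (exchange (treeSet Fj j) Fi Fj) :=
      exchange_extreme hlt hFi hFj hFjj
    have hH2i : exchange (treeSet Fj j) Fi Fj i = none := by
      rw [exchange_not_mem hA]; exact hFii
    have hH2j : exchange (treeSet Fj j) Fi Fj j = none := by
      rw [exchange_mem hjDj]; exact hFjj
    obtain ⟨r0, hir0, hr0⟩ := exists_root hF0.1.1 i
    have hjr0 : j ∈ treeSet F0 r0 := hF0ji.trans hir0
    exact hij (root_in_tree_unique hlt hH2ex hF0 hr0 hir0 hjr0 hH2i hH2j)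
  refine ⟨⟨Fj, hFj, stepA⟩, fun H hH => ?_⟩
  -- Step B : j belongs to the tree of `Fi` rooted at `i`
  have stepB : j ∈ treeSet Fi i := by
    by_contra hB
    have hH2ex : ExtremeForest A w k (exchange (treeSet Fi i) Fj Fi) :=
      exchange_extreme hlt hFj hFi hFii
    have hH2i : exchange (treeSet Fi i) Fj Fi i = none := by
      rw [exchange_mem hiDi]; exact hFii
    have hH2j : exchange (treeSet Fi i) Fj Fi j = none := by
      rw [exchange_not_mem hB]; exact hFjj
    exact hij (root_in_tree_unique hlt hH2ex hFj hFjj stepA hjDj hH2i hH2j)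
  -- Step C : in any extreme forest `H`, the roots of `i` and `j` coincide
  obtain ⟨ri, hiri, hri⟩ := exists_root hH.1.1 i
  obtain ⟨rj, hjrj, hrj⟩ := exists_root hH.1.1 j
  suffices hrr : ri = rj by exact ⟨ri, hri, hiri, hrr ▸ hjrj⟩
  by_contra hne
  have hE6ex : ExtremeForest A w k (exchange (treeSet Fi i) H Fi) :=
    exchange_extreme hlt hH hFi hFii
  have hE6i : exchange (treeSet Fi i) H Fi i = none := by
    rw [exchange_mem hiDi]; exact hFii
  have hriDi : ri ∈ treeSet Fi i := by
    by_contra hri'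
    have hE6ri : exchange (treeSet Fi i) H Fi ri = none := by
      rw [exchange_not_mem hri']; exact hri
    have hieq : i = ri :=
      root_in_tree_unique hlt hE6ex hH hri hiri ReflTransGen.refl hE6i hE6ri
    exact hri' (hieq ▸ hiDi)
  have hrjDj : rj ∈ treeSet Fj j := by
    by_contra hrj'
    have hE7ex : ExtremeForest A w k (exchange (treeSet Fj j) H Fj) :=
      exchange_extreme hlt hH hFj hFjj
    have hE7j : exchange (treeSet Fj j) H Fj j = none := by
      rw [exchange_mem hjDj]; exact hFjj
    have hE7rj : exchange (treeSet Fj j) H Fj rj = none := by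
      rw [exchange_not_mem hrj']; exact hrj
    have hjeq : j = rj :=
      root_in_tree_unique hlt hE7ex hH hrj hjrj ReflTransGen.refl hE7j hE7rj
    exact hrj' (hjeq ▸ hjDj)
  have hrjDi : rj ∉ treeSet Fi i := by
    intro hmem
    exact hne (root_in_tree_unique hlt hH hFi hFii hriDi hmem hri hrj)
  have hE6rj : exchange (treeSet Fi i) H Fi rj = none := by
    rw [exchange_not_mem hrjDi]; exact hrj
  have hirj : i = rj :=
    root_in_tree_unique hlt hE6ex hFj hFjj stepA hrjDj hE6i hE6rj
  have hHi : H i = none := by rw [hirj]; exact hrj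
  have : ri = i := reaches_root_unique hiri hri ReflTransGen.refl hHi
  exact hne (this.trans hirj)
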